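/- Let κ be a regular uncountable cardinal and let C and C̃ be clubs in κ with C ⊆* C̃ (i.e., |C \ C̃| < κ). Then for every bounded operator x ∈ D[C̃] there exists y ∈ D[C] such that x − y ∈ J_κ. -/

import Mathlib

noncomputable section

open Set

/-- The Hilbert space ℓ²(o): square-summable families indexed by the ordinals below `o`. -/
abbrev L2 (o : Ordinal) : Type := ↥(lp (fun _ : o.ToType => ℂ) 2)

/-- Bounded linear operators on ℓ²(o). -/
abbrev Bd (o : Ordinal) : Type := L2 o →L[ℂ] L2 o

/-- The ordinal (below `o`) corresponding to an index `i` of ℓ²(o). -/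
def ordOf {o : Ordinal} (i : o.ToType) : Ordinal := ((Ordinal.ToType.mk (o := o)).symm i : Ordinal)

/-- `InvOn o S x` : the closed subspace of ℓ²(o) of functions supported on `S`
is an invariant subspace of `x`. -/
def InvOn (o : Ordinal) (S : Set Ordinal) (x : Bd o) : Prop :=
  ∀ f : L2 o, (∀ i : o.ToType, ordOf i ∉ S → f i = 0) →
    ∀ i : o.ToType, ordOf i ∉ S → x f i = 0

/-- `Dclub o C` (the algebra `D[C]`) is the set of bounded operators `x` on ℓ²(o) such
that for every `α ∈ C`, ℓ²(α) is an invariant subspace of both `x` and its adjoint. -/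
def Dclub (o : Ordinal) (C : Set Ordinal) : Set (Bd o) :=
  {x | ∀ α ∈ C, InvOn o (Set.Iio α) x ∧ InvOn o (Set.Iio α) (star x)}

/-- A club in (the ordinal) `o`: a closed unbounded subset of `o`. -/
def IsClubOrd (o : Ordinal) (C : Set Ordinal) : Prop :=
  C ⊆ Set.Iio o ∧
  (∀ s ⊆ C, s.Nonempty → sSup s < o → sSup s ∈ C) ∧
  (∀ α < o, ∃ β ∈ C, α < β)

/-- The least element of `C` strictly above `α`. -/
def clubSucc (C : Set Ordinal) (α : Ordinal) : Ordinal :=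
  sInf {β | β ∈ C ∧ α < β}

/-- `memJ κ x` : the (Hilbert space) dimension of the range of `x` is `< κ`;
equivalently (for uncountable κ), the range of `x` is contained in the closure
of a set of cardinality `< κ`. -/
def memJ (κ : Cardinal) {o : Ordinal} (x : Bd o) : Prop :=
  ∃ D : Set (L2 o), Cardinal.mk D < κ ∧ Set.range ⇑x ⊆ closure D

/-- `A ⊆* B` (mod < κ) for sets of ordinals: the cardinality of `A \ B` is `< κ`. -/
def AlmostSub (κ : Cardinal.{0}) (A B : Set Ordinal) : Prop :=
  Cardinal.mk ↥(A \ B) < Cardinal.lift.{1, 0} κ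

/-! ### Auxiliary material -/

open Classical

section Aux

variable {o γ : Ordinal}

lemma ordOf_lt {o : Ordinal} (i : o.ToType) : ordOf i < o :=
  ((Ordinal.ToType.mk (o := o)).symm i).2

lemma ordOf_injective {o : Ordinal} : Function.Injective (ordOf (o := o)) := by
  intro i j hij
  have : (Ordinal.ToType.mk (o := o)).symm i = (Ordinal.ToType.mk (o := o)).symm j :=
    Subtype.coe_injective hij
  exact (Ordinal.ToType.mk (o := o)).symm.injective this

lemma projFun_memℓp (f : L2 o) :
    Memℓp (fun i => if ordOf i < γ then f i else 0 : ∀ _ : o.ToType, ℂ) 2 := by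
  apply memℓp_gen
  apply Summable.of_nonneg_of_le (fun i => by positivity)
    (fun i => ?_) ((lp.memℓp f).summable (by norm_num))
  · apply Real.rpow_le_rpow (norm_nonneg _) ?_ (by norm_num)
    by_cases h : ordOf i < γ <;> simp [h]

open Classical in
/-- truncation projection onto coordinates `< γ` -/
def proj (o γ : Ordinal) : Bd o :=
  LinearMap.mkContinuous
    { toFun := fun f => (⟨_, projFun_memℓp (γ := γ) f⟩ : L2 o)
      map_add' := by
        intro f g; apply lp.ext; funext i
        have h2 : (((⟨_, projFun_memℓp (γ := γ) f⟩ : L2 o) + ⟨_, projFun_memℓp (γ := γ) g⟩ : L2 o) i)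
            = (if ordOf i < γ then f i else 0) + (if ordOf i < γ then g i else 0) := by
          rw [lp.coeFn_add]; rfl
        rw [h2]
        by_cases h : ordOf i < γ <;> simp [h, lp.coeFn_add]
      map_smul' := by
        intro c f; apply lp.ext; funext i
        have h2 : ((c • (⟨_, projFun_memℓp (γ := γ) f⟩ : L2 o)) i)
            = c • (if ordOf i < γ then f i else 0) := by
          rw [lp.coeFn_smul]; rfl
        dsimp only [RingHom.id_apply]
        rw [h2]
        by_cases h : ordOf i < γ <;> simp [h, lp.coeFn_smul] }
    1 (by
      intro f
      rw [one_mul]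
      apply lp.norm_le_of_forall_sum_le (by norm_num) (norm_nonneg f)
      intro s
      calc ∑ i ∈ s, ‖(if ordOf i < γ then f i else 0 : ℂ)‖ ^ (2 : ENNReal).toReal
          ≤ ∑ i ∈ s, ‖f i‖ ^ (2 : ENNReal).toReal := by
            apply Finset.sum_le_sum
            intro i _
            apply Real.rpow_le_rpow (norm_nonneg _) ?_ (by norm_num)
            by_cases h : ordOf i < γ <;> simp [h]
        _ ≤ ‖f‖ ^ (2 : ENNReal).toReal := lp.sum_rpow_le_norm_rpow (by norm_num) f s)

lemma proj_apply (f : L2 o) (i : o.ToType) :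
    proj o γ f i = if ordOf i < γ then f i else 0 := rfl

lemma proj_star : star (proj o γ) = proj o γ := by
  rw [ContinuousLinearMap.star_eq_adjoint]
  rw [eq_comm, ContinuousLinearMap.eq_adjoint_iff]
  intro f g
  rw [lp.inner_eq_tsum, lp.inner_eq_tsum]
  apply tsum_congr
  intro i
  by_cases h : ordOf i < γ <;> simp [proj_apply, h]

def Gset (o γ : Ordinal) : Set o.ToType := {i | ordOf i < γ}

def wvec (o γ : Ordinal) (j : ↥(Gset o γ) × ℚ × ℚ) : L2 o :=
  ((j.2.1 : ℂ) + (j.2.2 : ℂ) * Complex.I) • lp.single 2 (j.1 : o.ToType) 1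

def Vset (o γ : Ordinal) : Set (L2 o) :=
  Set.range (fun t : Finset (↥(Gset o γ) × ℚ × ℚ) => ∑ j ∈ t, wvec o γ j)

lemma single_app (i j : o.ToType) (a : ℂ) :
    (lp.single 2 i a : L2 o) j = if j = i then a else 0 := by
  rcases eq_or_ne j i with h | h
  · subst h; simp [lp.single_apply_self]
  · rw [if_neg h]
    exact lp.single_apply_ne 2 i _ h

lemma single_zero (i : o.ToType) : (lp.single 2 i (0 : ℂ) : L2 o) = 0 := by
  apply lp.ext; funext j
  rw [single_app]
  simp only [ite_self, lp.coeFn_zero, Pi.zero_apply]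

lemma single_sub (i : o.ToType) (a b : ℂ) :
    (lp.single 2 i (a - b) : L2 o) = lp.single 2 i a - lp.single 2 i b := by
  apply lp.ext; funext j
  rw [lp.coeFn_sub, Pi.sub_apply, single_app, single_app, single_app]
  split_ifs <;> simp

lemma ratApprox (c : ℂ) {η : ℝ} (hη : 0 < η) :
    ∃ q : ℚ × ℚ, ‖c - ((q.1 : ℂ) + (q.2 : ℂ) * Complex.I)‖ < η := by
  obtain ⟨q1, hq1⟩ := exists_rat_near c.re (by linarith : (0:ℝ) < η/2)
  obtain ⟨q2, hq2⟩ := exists_rat_near c.im (by linarith : (0:ℝ) < η/2)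
  refine ⟨(q1, q2), ?_⟩
  have h := Complex.norm_le_abs_re_add_abs_im (c - ((q1 : ℂ) + (q2 : ℂ) * Complex.I))
  have hre : (c - ((q1 : ℂ) + (q2 : ℂ) * Complex.I)).re = c.re - q1 := by simp
  have him : (c - ((q1 : ℂ) + (q2 : ℂ) * Complex.I)).im = c.im - q2 := by simp
  calc ‖_‖ ≤ |c.re - (q1:ℝ)| + |c.im - (q2:ℝ)| := by rw [← hre, ← him]; exact h
    _ < η/2 + η/2 := add_lt_add hq1 hq2
    _ = η := by ring

open Classical in
lemma mem_closure_V (h : L2 o) (hh : ∀ i, ¬ ordOf i < γ → h i = 0) :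
    h ∈ closure (Vset o γ) := by
  rw [Metric.mem_closure_iff]
  intro ε hε
  have hs2 := lp.hasSum_single (by norm_num : (2 : ENNReal) ≠ ⊤) h
  obtain ⟨s, hs⟩ := (Metric.tendsto_nhds.mp hs2 (ε/2) (by linarith)).exists
  set s' : Finset o.ToType := s.filter (fun i => ordOf i < γ) with hs'
  have hsum_eq : ∑ i ∈ s, lp.single 2 i (h i) = ∑ i ∈ s', lp.single 2 i (h i) := by
    rw [hs']
    refine (Finset.sum_filter_of_ne ?_).symm
    intro i _ hne
    by_contra hlt
    exact hne (by rw [hh i hlt]; exact single_zero i)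
  set η : ℝ := ε / (2 * (s'.card + 1)) with hηdef
  have hη : 0 < η := by positivity
  choose q hq using fun i : o.ToType => ratApprox (h i) hη
  set c : o.ToType → ℂ := fun i => ((q i).1 : ℂ) + ((q i).2 : ℂ) * Complex.I with hc
  have hmem : ∀ i ∈ s', ordOf i < γ := fun i hi => (Finset.mem_filter.mp hi).2
  set t : Finset (↥(Gset o γ) × ℚ × ℚ) :=
    s'.attach.image (fun i => ((⟨i.1, hmem i.1 i.2⟩ : ↥(Gset o γ)), q i.1)) with ht
  have htsum : ∑ j ∈ t, wvec o γ j = ∑ i ∈ s', c i • lp.single 2 i 1 := by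
    rw [ht, Finset.sum_image ?hinj]
    case hinj =>
      intro a _ b _ hab
      have := congrArg (fun z => (z.1 : o.ToType)) hab
      exact Subtype.ext this
    rw [← Finset.sum_attach s' (fun i => c i • lp.single 2 i 1)]
    rfl
  refine ⟨∑ j ∈ t, wvec o γ j, ⟨t, rfl⟩, ?_⟩
  have hd2 : dist (∑ i ∈ s', lp.single 2 i (h i)) (∑ j ∈ t, wvec o γ j) ≤ s'.card * η := by
    rw [htsum, dist_eq_norm, ← Finset.sum_sub_distrib]
    have heq : ∀ i ∈ s', lp.single 2 i (h i) - c i • lp.single 2 i 1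
        = (lp.single 2 i (h i - c i) : L2 o) := by
      intro i _
      rw [single_sub]
      congr 1
      rw [← lp.single_smul, smul_eq_mul, mul_one]
    rw [Finset.sum_congr rfl heq]
    calc ‖∑ i ∈ s', (lp.single 2 i (h i - c i) : L2 o)‖
        ≤ ∑ i ∈ s', ‖(lp.single 2 i (h i - c i) : L2 o)‖ := norm_sum_le _ _
      _ ≤ ∑ _i ∈ s', η := by
          apply Finset.sum_le_sum
          intro i _
          have := lp.norm_single (E := fun _ : o.ToType => ℂ) (p := 2) (by norm_num) i (h i - c i)
          rw [this]
          exact (hq i).le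
      _ = s'.card * η := by rw [Finset.sum_const, nsmul_eq_mul]
  have hne : ((s'.card : ℝ) + 1) ≠ 0 := by positivity
  have hcard : (s'.card : ℝ) * η ≤ ε / 2 := by
    calc (s'.card : ℝ) * η ≤ ((s'.card : ℝ) + 1) * η :=
          mul_le_mul_of_nonneg_right (by linarith) hη.le
      _ = ε / 2 := by rw [hηdef]; field_simp
  calc dist h (∑ j ∈ t, wvec o γ j)
      ≤ dist h (∑ i ∈ s', lp.single 2 i (h i)) + dist (∑ i ∈ s', lp.single 2 i (h i)) (∑ j ∈ t, wvec o γ j) :=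
        dist_triangle _ _ _
    _ < ε / 2 + ε / 2 := add_lt_add_of_lt_of_le (by rw [← hsum_eq, dist_comm]; exact hs) (hd2.trans hcard)
    _ = ε := by ring

lemma add_mem_closure_image {E : Type*} [NormedAddCommGroup E] {A B : Set E} {a b : E}
    (ha : a ∈ closure A) (hb : b ∈ closure B) :
    a + b ∈ closure ((fun p : E × E => p.1 + p.2) '' (A ×ˢ B)) := by
  rw [Metric.mem_closure_iff]
  intro ε hε
  obtain ⟨u, hu, hau⟩ := Metric.mem_closure_iff.mp ha (ε/2) (by linarith)
  obtain ⟨v, hv, hbv⟩ := Metric.mem_closure_iff.mp hb (ε/2) (by linarith)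
  refine ⟨u + v, ⟨(u, v), ⟨hu, hv⟩, rfl⟩, ?_⟩
  calc dist (a + b) (u + v) ≤ dist a u + dist b v := dist_add_add_le _ _ _ _
    _ < ε/2 + ε/2 := add_lt_add hau hbv
    _ = ε := by ring

/-- conjugation by the co-projection preserves invariance for all levels, given
invariance above γ. -/
lemma invOn_qxq {x' : Bd o} {α : Ordinal} (hx' : γ ≤ α → InvOn o (Set.Iio α) x') :
    InvOn o (Set.Iio α) ((1 - proj o γ) * x' * (1 - proj o γ)) := by
  intro f hf i hi
  rcases le_or_gt γ α with hγα | hαγ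
  · have hinv := hx' hγα
    have hqf : ∀ j : o.ToType, ordOf j ∉ Set.Iio α → ((1 - proj o γ) f) j = 0 := by
      intro j hj
      have hjγ : ¬ ordOf j < γ := fun hlt => hj (lt_of_lt_of_le hlt hγα)
      rw [ContinuousLinearMap.sub_apply, ContinuousLinearMap.one_apply,
        lp.coeFn_sub, Pi.sub_apply, proj_apply, if_neg hjγ, sub_zero]
      exact hf j hj
    have hx0 : x' ((1 - proj o γ) f) i = 0 := hinv _ hqf i hi
    have hiγ : ¬ ordOf i < γ := fun hlt => hi (lt_of_lt_of_le hlt hγα)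
    rw [ContinuousLinearMap.mul_apply, ContinuousLinearMap.mul_apply,
      ContinuousLinearMap.sub_apply, ContinuousLinearMap.one_apply,
      lp.coeFn_sub, Pi.sub_apply, proj_apply, if_neg hiγ, hx0, sub_zero]
  · have hqf : (1 - proj o γ) f = 0 := by
      apply lp.ext; funext j
      rw [ContinuousLinearMap.sub_apply, ContinuousLinearMap.one_apply,
        lp.coeFn_sub, Pi.sub_apply, proj_apply]
      by_cases hj : ordOf j < γ
      · rw [if_pos hj, sub_self, lp.coeFn_zero, Pi.zero_apply]
      · rw [if_neg hj, sub_zero, lp.coeFn_zero, Pi.zero_apply]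
        exact hf j (fun hlt => hj (lt_trans hlt hαγ))
    rw [ContinuousLinearMap.mul_apply, ContinuousLinearMap.mul_apply, hqf, map_zero, map_zero,
      lp.coeFn_zero, Pi.zero_apply]

end Aux

/-- **Lemma.** If `C ⊆* C̃` are clubs in a regular uncountable κ, then every `x ∈ D[C̃]`
differs from some `y ∈ D[C]` by an element of the ideal J_κ. -/
theorem Dclub_almost_subset (κ : Cardinal.{0}) (hreg : κ.IsRegular)
    (hunc : Cardinal.aleph0 < κ) (C Ct : Set Ordinal)
    (hC : IsClubOrd κ.ord C) (hCt : IsClubOrd κ.ord Ct)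
    (hsub : AlmostSub κ C Ct) :
    ∀ x ∈ Dclub κ.ord Ct, ∃ y ∈ Dclub κ.ord C, memJ κ (x - y) := by
  intro x hx
  -- bound the exceptional set
  set S : Set (κ.ord).ToType := {i | ordOf i ∈ C \ Ct} with hSdef
  have hS : Cardinal.mk ↥S < κ := by
    have hemb : ↥S ↪ ↥(C \ Ct) :=
      ⟨fun i => ⟨ordOf i.1, i.2⟩, by
        intro a b hab
        have hab' : (⟨ordOf (a : (κ.ord).ToType), a.2⟩ : ↥(C \ Ct))
            = ⟨ordOf (b : (κ.ord).ToType), b.2⟩ := hab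
        exact Subtype.ext (ordOf_injective (Subtype.mk_eq_mk.mp hab'))⟩
    have hle := Cardinal.lift_mk_le'.mpr ⟨hemb⟩
    rw [Cardinal.lift_id'] at hle
    exact Cardinal.lift_lt.mp (lt_of_le_of_lt hle hsub)
  have hδ : (⨆ i : ↥S, ordOf i.1) < κ.ord := by
    apply Ordinal.iSup_lt_ord
    · rw [hreg.cof_eq]; exact hS
    · exact fun i => ordOf_lt i.1
  obtain ⟨γ, hγC, hδγ⟩ := hC.2.2 _ hδ
  have hγo : γ < κ.ord := hC.1 hγC
  have key : ∀ α ∈ C, γ ≤ α → α ∈ Ct := by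
    intro α hα hγα
    by_contra hno
    have hαo : α < κ.ord := hC.1 hα
    have hord : ordOf ((Ordinal.ToType.mk (o := κ.ord)) ⟨α, hαo⟩) = α := by
      simp [ordOf, OrderIso.symm_apply_apply]
    have hin : ((Ordinal.ToType.mk (o := κ.ord)) ⟨α, hαo⟩) ∈ S := by
      rw [hSdef, mem_setOf_eq, hord]
      exact ⟨hα, hno⟩
    have hle := Ordinal.le_iSup (fun i : ↥S => ordOf i.1) ⟨_, hin⟩
    have hαδ : α ≤ ⨆ i : ↥S, ordOf i.1 := by rwa [hord] at hle
    exact absurd (lt_of_le_of_lt hαδ hδγ) (not_lt.mpr hγα)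
  -- the operator y
  set p : Bd κ.ord := proj κ.ord γ with hp
  set y : Bd κ.ord := (1 - p) * x * (1 - p) with hy
  have hyD : y ∈ Dclub κ.ord C := by
    intro α hα
    constructor
    · exact invOn_qxq (fun hγα => (hx α (key α hα hγα)).1)
    · have hstar : star y = (1 - p) * star x * (1 - p) := by
        have h1 : star (1 - p) = 1 - p := by
          rw [star_sub, star_one, hp, proj_star]
        rw [hy, star_mul, star_mul, h1, mul_assoc]
      rw [hstar]
      exact invOn_qxq (fun hγα => (hx α (key α hα hγα)).2)
  refine ⟨y, hyD, ?_⟩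
  -- the ideal part
  set z : Bd κ.ord := (1 - p) * x with hz
  set D : Set (L2 κ.ord) :=
    (fun pr : L2 κ.ord × L2 κ.ord => pr.1 + pr.2) ''
      ((Vset κ.ord γ) ×ˢ (⇑z '' (Vset κ.ord γ))) with hD
  have hVcard : Cardinal.mk ↥(Vset κ.ord γ) < κ := by
    have hG : Cardinal.mk ↥(Gset κ.ord γ) < κ := by
      have hemb : ↥(Gset κ.ord γ) ↪ γ.ToType :=
        ⟨fun i => (Ordinal.ToType.mk (o := γ)) ⟨ordOf i.1, i.2⟩, by
          intro a b hab
          have h2 := (Ordinal.ToType.mk (o := γ)).injective hab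
          have hab' : (⟨ordOf (a : (κ.ord).ToType), a.2⟩ : Set.Iio γ)
              = ⟨ordOf (b : (κ.ord).ToType), b.2⟩ := h2
          exact Subtype.ext (ordOf_injective (Subtype.mk_eq_mk.mp hab'))⟩
      calc Cardinal.mk ↥(Gset κ.ord γ) ≤ Cardinal.mk γ.ToType :=
            Cardinal.mk_le_of_injective hemb.2
        _ = γ.card := Cardinal.mk_toType γ
        _ < κ := Cardinal.lt_ord.mp hγo
    have hX : Cardinal.mk (↥(Gset κ.ord γ) × ℚ × ℚ) < κ := by
      have h1 : Cardinal.mk (↥(Gset κ.ord γ) × ℚ × ℚ)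
          = Cardinal.mk ↥(Gset κ.ord γ) * Cardinal.mk (ℚ × ℚ) := by
        rw [Cardinal.mk_prod, Cardinal.lift_id, Cardinal.lift_id]
      rw [h1]
      exact Cardinal.mul_lt_of_lt hreg.aleph0_le hG
        (lt_of_le_of_lt (Cardinal.mk_le_aleph0) hunc)
    have hFin : Cardinal.mk (Finset (↥(Gset κ.ord γ) × ℚ × ℚ)) < κ := by
      cases finite_or_infinite (↥(Gset κ.ord γ) × ℚ × ℚ) with
      | inl h =>
          haveI := h
          haveI := Fintype.ofFinite (↥(Gset κ.ord γ) × ℚ × ℚ)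
          exact lt_of_lt_of_le (Cardinal.lt_aleph0_of_finite _) hunc.le
      | inr h => rwa [Cardinal.mk_finset_of_infinite]
    exact lt_of_le_of_lt (Cardinal.mk_range_le) hFin
  have himg : Cardinal.mk ↥(⇑z '' (Vset κ.ord γ)) < κ :=
    lt_of_le_of_lt (Cardinal.mk_image_le) hVcard
  have hDcard : Cardinal.mk ↥D < κ := by
    calc Cardinal.mk ↥D
        ≤ Cardinal.mk ↥((Vset κ.ord γ) ×ˢ (⇑z '' (Vset κ.ord γ))) := Cardinal.mk_image_le
      _ = Cardinal.mk (↥(Vset κ.ord γ) × ↥(⇑z '' (Vset κ.ord γ))) :=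
          Cardinal.mk_congr (Equiv.Set.prod _ _)
      _ = Cardinal.mk ↥(Vset κ.ord γ) * Cardinal.mk ↥(⇑z '' (Vset κ.ord γ)) := by
          rw [Cardinal.mk_prod, Cardinal.lift_id, Cardinal.lift_id]
      _ < κ := Cardinal.mul_lt_of_lt hreg.aleph0_le hVcard himg
  refine ⟨D, hDcard, ?_⟩
  rintro _ ⟨f, rfl⟩
  have hid : (x - y) f = p (x f) + z (p f) := by
    rw [ContinuousLinearMap.sub_apply, hy, hz]
    simp only [ContinuousLinearMap.mul_apply, ContinuousLinearMap.sub_apply,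
      ContinuousLinearMap.one_apply, map_sub]
    abel
  rw [hid]
  have h1 : p (x f) ∈ closure (Vset κ.ord γ) := by
    apply mem_closure_V
    intro i hi
    rw [hp, proj_apply, if_neg hi]
  have h2 : p f ∈ closure (Vset κ.ord γ) := by
    apply mem_closure_V
    intro i hi
    rw [hp, proj_apply, if_neg hi]
  have h3 : z (p f) ∈ closure (⇑z '' (Vset κ.ord γ)) :=
    (image_closure_subset_closure_image z.continuous) ⟨p f, h2, rfl⟩
  exact add_mem_closure_image h1 h3
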